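/- A d × d matrix over Z_d is called an anti-Latin square if each row has two equal entries and each column has two equal entries. For every d > 2, there exists a pair of d × d anti-Latin squares (a_{i,j}) and (b_{i,j}) such that the map (i,j) ↦ (a_{i,j}, b_{i,j}) from Z_d × Z_d to Z_d × Z_d is injective. -/
import Mathlib


/-- A `d × d` matrix over `Z_d` (given as a function) is an anti-Latin square if
every row has a repeated entry and every column has a repeated entry. -/
def IsAntiLatin {d : ℕ} (A : ZMod d → ZMod d → ZMod d) : Prop :=
  (∀ i : ZMod d, ∃ j j' : ZMod d, j ≠ j' ∧ A i j = A i j') ∧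
  (∀ j : ZMod d, ∃ i i' : ZMod d, i ≠ i' ∧ A i j = A i' j)

lemma natCast_ne_natCast_of_lt {d m n : ℕ} (hm : m < d) (hn : n < d) (h : m ≠ n) :
    (m : ZMod d) ≠ (n : ZMod d) := by
  simp only [Ne, ZMod.natCast_eq_natCast_iff, Nat.ModEq,
    Nat.mod_eq_of_lt hm, Nat.mod_eq_of_lt hn]
  exact h

/-- For every `d > 2` there exists a pair of `d × d` anti-Latin squares whose
superposition map `(i,j) ↦ (a_{i,j}, b_{i,j})` is injective. -/
theorem exists_injective_antiLatin_pair (d : ℕ) (hd : 2 < d) :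
    ∃ a b : ZMod d → ZMod d → ZMod d, IsAntiLatin a ∧ IsAntiLatin b ∧
      Function.Injective (fun ij : ZMod d × ZMod d => (a ij.1 ij.2, b ij.1 ij.2)) := by
  have h10 : (1 : ZMod d) ≠ 0 := by
    have := natCast_ne_natCast_of_lt (d := d) (m := 1) (n := 0) (by omega) (by omega) (by omega)
    simpa using this
  have h20 : (2 : ZMod d) ≠ 0 := by
    have := natCast_ne_natCast_of_lt (d := d) (m := 2) (n := 0) (by omega) (by omega) (by omega)
    simpa using this
  have h12 : (1 : ZMod d) ≠ 2 := by
    have := natCast_ne_natCast_of_lt (d := d) (m := 1) (n := 2) (by omega) (by omega) (by omega)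
    simpa using this
  have hadd1 : ∀ x : ZMod d, x + 1 ≠ x := fun x h => h10 (by
    have := congrArg (· - x) h; simpa [add_comm, add_sub_cancel_right] using this)
  refine ⟨fun i j => if i = j then i + 1 else i, fun i j => if i = j then j + 1 else j,
    ⟨?_, ?_⟩, ⟨?_, ?_⟩, ?_⟩
  · -- rows of a
    intro i
    have hn1 : i ≠ i + 1 := fun h => hadd1 i h.symm
    have hn2 : i ≠ i + 2 := by
      intro h
      exact h20 (by have := congrArg (· - i) h.symm; simpa using this)
    refine ⟨i + 1, i + 2, ?_, ?_⟩
    · intro h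
      exact h12 (by have := congrArg (· - i) h; simpa [add_comm, add_sub_cancel_right] using this)
    · simp [if_neg hn1, if_neg hn2, h10, h20]
  · -- columns of a
    intro j
    refine ⟨j, j + 1, fun h => hadd1 j h.symm, ?_⟩
    simp [if_neg (hadd1 j), h10]
  · -- rows of b
    intro i
    refine ⟨i, i + 1, fun h => hadd1 i h.symm, ?_⟩
    have hn1 : i ≠ i + 1 := fun h => hadd1 i h.symm
    simp [if_neg hn1, h10]
  · -- columns of b
    intro j
    have hn1 : j + 1 ≠ j := hadd1 j
    have hn2 : j + 2 ≠ j := by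
      intro h
      exact h20 (by have := congrArg (· - j) h; simpa using this)
    refine ⟨j + 1, j + 2, ?_, ?_⟩
    · intro h
      exact h12 (by have := congrArg (· - j) h; simpa [add_comm, add_sub_cancel_right] using this)
    · simp [if_neg hn1, if_neg hn2, h10, h20]
  · -- injectivity
    rintro ⟨i, j⟩ ⟨k, l⟩ h
    simp only [Prod.mk.injEq] at h
    obtain ⟨h1, h2⟩ := h
    by_cases hij : i = j <;> by_cases hkl : k = l <;>
      simp only [hij, hkl, if_pos rfl, if_neg, ite_true, ite_false] at h1 h2
    · have : j = l := by
        have := congrArg (· - 1) h1; simpa using this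
      simp [hij, hkl, this]
    · exact absurd (h1.symm.trans h2) hkl
    · exact absurd (h1.trans h2.symm) hij
    · simp [h1, h2]
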